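/- Let G be a tree, and let G' be the graph obtained from the line graph L(G) by iteratively contracting every maximal clique with more than two vertices to a single vertex. Then G' is a tree, and the edges of G' are in bijection with the degree-2 vertices of G. -/

import Mathlib

/-- Two edges of `G` are related if they share an endpoint of degree greater than two; the
quotient of the edge set by (the equivalence closure of) this relation corresponds to
iteratively contracting every maximal clique of size `> 2` in the line graph `L(G)`. -/
def edgeRel {V : Type*} [Fintype V] (G : SimpleGraph V) [DecidableRel G.Adj] :
    G.edgeSet → G.edgeSet → Prop :=
  fun e f => ∃ x : V, x ∈ (e : Sym2 V) ∧ x ∈ (f : Sym2 V) ∧ 2 < G.degree x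

/-- The graph obtained from the line graph of `G` by contracting all maximal cliques with more
than two vertices: vertices are the classes of edges of `G`, and two distinct classes are
adjacent iff they contain edges of `G` sharing an endpoint. -/
def contractedLineGraph {V : Type*} [Fintype V] (G : SimpleGraph V) [DecidableRel G.Adj] :
    SimpleGraph (Quot (edgeRel G)) :=
  SimpleGraph.fromRel fun c c' => ∃ e f : G.edgeSet, Quot.mk _ e = c ∧ Quot.mk _ f = c' ∧
    ∃ x : V, x ∈ (e : Sym2 V) ∧ x ∈ (f : Sym2 V)

namespace CLGAux

open SimpleGraph Walk Relation

variable {V : Type*} [Fintype V] [DecidableEq V] {G : SimpleGraph V} [DecidableRel G.Adj]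

lemma mk_eq_of_rtg {e f : G.edgeSet} (h : ReflTransGen (edgeRel G) e f) :
    Quot.mk (edgeRel G) e = Quot.mk (edgeRel G) f := by
  induction h with
  | refl => rfl
  | tail _ hbc ih => exact ih.trans (Quot.sound hbc)

lemma rtg_of_eqvGen {α : Type*} {r : α → α → Prop} (hs : Symmetric r) {a b : α}
    (h : Relation.EqvGen r a b) : ReflTransGen r a b := by
  induction h with
  | rel _ _ h => exact ReflTransGen.single h
  | refl => exact ReflTransGen.refl
  | symm a b _ ih => exact (haveI : Std.Symm r := ⟨fun a b h => hs h⟩; ReflTransGen.symmetric.symm _ _ ih)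
  | trans a b c _ _ ih1 ih2 => exact ih1.trans ih2

lemma rtg_of_mk_eq {e f : G.edgeSet} (h : Quot.mk (edgeRel G) e = Quot.mk (edgeRel G) f) :
    ReflTransGen (edgeRel G) e f :=
  rtg_of_eqvGen (fun a b ⟨x, h1, h2, h3⟩ => ⟨x, h2, h1, h3⟩) (Quot.eq.mp h)

lemma mem_edge_other {x : V} {e : G.edgeSet} (hx : x ∈ (e : Sym2 V)) :
    ∃ a, G.Adj x a ∧ (e : Sym2 V) = s(x, a) := by
  refine ⟨Sym2.Mem.other' hx, ?_, (Sym2.other_spec' hx).symm⟩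
  have he := e.2
  rw [← Sym2.other_spec' hx, SimpleGraph.mem_edgeSet] at he
  exact he

/-- The fundamental walk lemma: two edges in the same `edgeRel`-class are connected by a
walk whose interior vertices have degree `> 2` and whose edges lie in the same class. -/
lemma exists_walk_of_mk_eq {e f : G.edgeSet}
    (h : Quot.mk (edgeRel G) e = Quot.mk (edgeRel G) f)
    {u w : V} (hu : u ∈ (e : Sym2 V)) (hw : w ∈ (f : Sym2 V)) :
    ∃ p : G.Walk u w, (∀ v ∈ p.support, v = u ∨ v = w ∨ 2 < G.degree v) ∧
      ∀ d ∈ p.edges, ∃ hd : d ∈ G.edgeSet,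
        Quot.mk (edgeRel G) ⟨d, hd⟩ = Quot.mk (edgeRel G) e := by
  have h' : ReflTransGen (edgeRel G) e f := rtg_of_mk_eq h
  clear h
  suffices H : ∀ (g : G.edgeSet), ReflTransGen (edgeRel G) e g → ∀ w, w ∈ (g : Sym2 V) →
      ∃ p : G.Walk u w, (∀ v ∈ p.support, v = u ∨ v = w ∨ 2 < G.degree v) ∧
        ∀ d ∈ p.edges, ∃ hd : d ∈ G.edgeSet,
          Quot.mk (edgeRel G) ⟨d, hd⟩ = Quot.mk (edgeRel G) e by
    exact H f h' w hw
  clear h' hw w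
  intro g hg
  induction hg with
  | refl =>
    intro w hw
    rcases eq_or_ne u w with rfl | hne
    · exact ⟨Walk.nil, by simp, by simp⟩
    · have he : (e : Sym2 V) = s(u, w) := (Sym2.mem_and_mem_iff hne).1 ⟨hu, hw⟩
      have hadj : G.Adj u w := by
        have := e.2; rwa [he, SimpleGraph.mem_edgeSet] at this
      refine ⟨Walk.cons hadj Walk.nil, ?_, ?_⟩
      · intro v hv
        simp only [Walk.support_cons, Walk.support_nil, List.mem_cons,
          List.mem_singleton, List.not_mem_nil, or_false] at hv
        tauto
      intro d hd
      simp only [Walk.edges_cons, Walk.edges_nil, List.mem_singleton] at hd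
      subst hd
      refine ⟨(SimpleGraph.mem_edgeSet G).mpr hadj, ?_⟩
      congr 1
      exact Subtype.ext he.symm
  | @tail b c hab hbc ih =>
    intro w hw
    obtain ⟨x, hxb, hxc, hxd⟩ := hbc
    obtain ⟨p, hps, hpe⟩ := ih x hxb
    rcases eq_or_ne x w with rfl | hxw
    · refine ⟨p, fun v hv => ?_, hpe⟩
      rcases hps v hv with h1 | h1 | h1 <;> tauto
    · have hcs : (c : Sym2 V) = s(x, w) := (Sym2.mem_and_mem_iff hxw).1 ⟨hxc, hw⟩
      have hadj : G.Adj x w := by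
        have := c.2; rwa [hcs, SimpleGraph.mem_edgeSet] at this
      refine ⟨p.concat hadj, ?_, ?_⟩
      · intro v hv
        rw [Walk.support_concat, List.mem_append] at hv
        rcases hv with hv | hv
        · rcases hps v hv with h1 | h1 | h1
          · tauto
          · subst h1; exact Or.inr (Or.inr hxd)
          · tauto
        · simp only [List.mem_singleton] at hv; tauto
      · intro d hd
        rw [Walk.edges_concat, List.concat_eq_append, List.mem_append] at hd
        rcases hd with hd | hd
        · exact hpe d hd
        · simp only [List.mem_singleton] at hd
          subst hd
          refine ⟨(SimpleGraph.mem_edgeSet G).mpr hadj, ?_⟩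
          have h1 : (⟨s(x, w), (SimpleGraph.mem_edgeSet G).mpr hadj⟩ : G.edgeSet) = c :=
            Subtype.ext hcs.symm
          rw [h1]
          exact (mk_eq_of_rtg (hab.tail ⟨x, hxb, hxc, hxd⟩)).symm

/-- Path version of `exists_walk_of_mk_eq`. -/
lemma exists_path_of_mk_eq {e f : G.edgeSet}
    (h : Quot.mk (edgeRel G) e = Quot.mk (edgeRel G) f)
    {u w : V} (hu : u ∈ (e : Sym2 V)) (hw : w ∈ (f : Sym2 V)) :
    ∃ p : G.Walk u w, p.IsPath ∧ (∀ v ∈ p.support, v = u ∨ v = w ∨ 2 < G.degree v) ∧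
      ∀ d ∈ p.edges, ∃ hd : d ∈ G.edgeSet,
        Quot.mk (edgeRel G) ⟨d, hd⟩ = Quot.mk (edgeRel G) e := by
  obtain ⟨p, h1, h2⟩ := exists_walk_of_mk_eq h hu hw
  exact ⟨p.bypass, p.bypass_isPath, fun v hv => h1 v (p.support_bypass_subset hv),
    fun d hd => h2 d (p.edges_bypass_subset hd)⟩

lemma edges_at_of_degree_two {x : V} (hx : G.degree x = 2) {e f g : G.edgeSet}
    (he : x ∈ (e : Sym2 V)) (hf : x ∈ (f : Sym2 V)) (hef : e ≠ f)
    (hg : x ∈ (g : Sym2 V)) : g = e ∨ g = f := by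
  obtain ⟨a, haa, hea⟩ := mem_edge_other he
  obtain ⟨b, hbb, hfb⟩ := mem_edge_other hf
  obtain ⟨c, hcc, hgc⟩ := mem_edge_other hg
  have hab : a ≠ b := by
    rintro rfl
    exact hef (Subtype.ext (hea.trans hfb.symm))
  have hsub : ({a, b} : Finset V) ⊆ G.neighborFinset x := by
    intro y hy
    rw [SimpleGraph.mem_neighborFinset]
    rcases Finset.mem_insert.mp hy with rfl | hy
    · exact haa
    · rw [Finset.mem_singleton] at hy; subst hy; exact hbb
  have heq : ({a, b} : Finset V) = G.neighborFinset x := by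
    apply Finset.eq_of_subset_of_card_le hsub
    rw [Finset.card_pair hab, G.card_neighborFinset_eq_degree x, hx]
  have hc' : c ∈ ({a, b} : Finset V) := by
    rw [heq, SimpleGraph.mem_neighborFinset]; exact hcc
  rcases Finset.mem_insert.mp hc' with rfl | hc'
  · exact Or.inl (Subtype.ext (hgc.trans hea.symm))
  · rw [Finset.mem_singleton] at hc'; subst hc'
    exact Or.inr (Subtype.ext (hgc.trans hfb.symm))

lemma two_le_degree_of_two_edges {x : V} {e f : G.edgeSet}
    (he : x ∈ (e : Sym2 V)) (hf : x ∈ (f : Sym2 V)) (hef : e ≠ f) : 2 ≤ G.degree x := by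
  obtain ⟨a, haa, hea⟩ := mem_edge_other he
  obtain ⟨b, hbb, hfb⟩ := mem_edge_other hf
  have hab : a ≠ b := by
    rintro rfl
    exact hef (Subtype.ext (hea.trans hfb.symm))
  have hsub : ({a, b} : Finset V) ⊆ G.neighborFinset x := by
    intro y hy
    rw [SimpleGraph.mem_neighborFinset]
    rcases Finset.mem_insert.mp hy with rfl | hy
    · exact haa
    · rw [Finset.mem_singleton] at hy; subst hy; exact hbb
  calc 2 = ({a, b} : Finset V).card := (Finset.card_pair hab).symm
    _ ≤ (G.neighborFinset x).card := Finset.card_le_card hsub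
    _ = G.degree x := G.card_neighborFinset_eq_degree x

/-- Every edge of the contracted line graph comes from a degree-2 vertex of `G`. -/
lemma adj_elim {c c' : Quot (edgeRel G)} (h : (contractedLineGraph G).Adj c c') :
    ∃ (x : V) (e f : G.edgeSet), G.degree x = 2 ∧ x ∈ (e : Sym2 V) ∧ x ∈ (f : Sym2 V) ∧
      Quot.mk (edgeRel G) e = c ∧ Quot.mk (edgeRel G) f = c' ∧ e ≠ f := by
  have aux : ∀ (c c' : Quot (edgeRel G)), c ≠ c' →
      (∃ e f : G.edgeSet, Quot.mk _ e = c ∧ Quot.mk _ f = c' ∧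
        ∃ x : V, x ∈ (e : Sym2 V) ∧ x ∈ (f : Sym2 V)) →
      ∃ (x : V) (e f : G.edgeSet), G.degree x = 2 ∧ x ∈ (e : Sym2 V) ∧ x ∈ (f : Sym2 V) ∧
        Quot.mk (edgeRel G) e = c ∧ Quot.mk (edgeRel G) f = c' ∧ e ≠ f := by
    intro c c' hne h
    obtain ⟨e, f, hc, hc', x, hxe, hxf⟩ := h
    have hef : e ≠ f := by
      rintro rfl
      exact hne (hc.symm.trans hc')
    have hd2 : G.degree x = 2 := by
      have hle : G.degree x ≤ 2 := by
        by_contra h3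
        push_neg at h3
        exact hne (hc.symm.trans ((Quot.sound ⟨x, hxe, hxf, h3⟩).trans hc'))
      have hge := two_le_degree_of_two_edges hxe hxf hef
      omega
    exact ⟨x, e, f, hd2, hxe, hxf, hc, hc', hef⟩
  rw [contractedLineGraph, SimpleGraph.fromRel_adj] at h
  obtain ⟨hne, h | h⟩ := h
  · exact aux c c' hne h
  · obtain ⟨x, e, f, hd2, hxe, hxf, hc, hc', hef⟩ := aux c' c hne.symm h
    exact ⟨x, f, e, hd2, hxf, hxe, hc', hc, hef.symm⟩

variable (G) in
/-- `x` is a junction for the pair of classes `(c, c')`. -/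
def Junction (x : V) (c c' : Quot (edgeRel G)) : Prop :=
  G.degree x = 2 ∧ ∃ e f : G.edgeSet, x ∈ (e : Sym2 V) ∧ x ∈ (f : Sym2 V) ∧
    Quot.mk (edgeRel G) e = c ∧ Quot.mk (edgeRel G) f = c'

/-- In a tree, the two edges at a degree-2 vertex lie in distinct classes. -/
lemma mk_ne_of_degree_two (hT : G.IsTree) {x : V} (hx : G.degree x = 2) {e f : G.edgeSet}
    (he : x ∈ (e : Sym2 V)) (hf : x ∈ (f : Sym2 V)) (hef : e ≠ f) :
    Quot.mk (edgeRel G) e ≠ Quot.mk (edgeRel G) f := by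
  intro hmk
  obtain ⟨a, hxa, hea⟩ := mem_edge_other he
  obtain ⟨b, hxb, hfb⟩ := mem_edge_other hf
  have hab : a ≠ b := by
    rintro rfl
    exact hef (Subtype.ext (hea.trans hfb.symm))
  have hax : a ≠ x := hxa.ne'
  have hbx : b ≠ x := hxb.ne'
  have hae : a ∈ (e : Sym2 V) := by rw [hea]; exact Sym2.mem_mk_right x a
  have hbf : b ∈ (f : Sym2 V) := by rw [hfb]; exact Sym2.mem_mk_right x b
  obtain ⟨q, hq, hqs, -⟩ := exists_path_of_mk_eq hmk hae hbf
  have hxq : x ∉ q.support := by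
    intro hxs
    rcases hqs x hxs with h1 | h1 | h1
    · exact hax h1.symm
    · exact hbx h1.symm
    · omega
  have hP2 : (Walk.cons hxa.symm (Walk.cons hxb Walk.nil)).IsPath := by
    rw [Walk.isPath_def]
    simp [hax, hab, hbx.symm]
  have := hT.IsAcyclic.path_unique ⟨q, hq⟩ ⟨Walk.cons hxa.symm (Walk.cons hxb Walk.nil), hP2⟩
  have hqeq : q = Walk.cons hxa.symm (Walk.cons hxb Walk.nil) := congrArg Subtype.val this
  apply hxq
  rw [hqeq]
  simp

lemma edges_ne_nil_of_ne {u v : V} (p : G.Walk u v) (h : u ≠ v) : p.edges ≠ [] := by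
  cases p with
  | nil => exact absurd rfl h
  | cons h' q => simp

/-- Key uniqueness: a pair of distinct classes determines the connecting degree-2 vertex. -/
lemma eq_of_junction (hT : G.IsTree) {x y : V} {e f g h : G.edgeSet}
    (hef : Quot.mk (edgeRel G) e ≠ Quot.mk (edgeRel G) f)
    (hxe : x ∈ (e : Sym2 V)) (hxf : x ∈ (f : Sym2 V))
    (hyg : y ∈ (g : Sym2 V)) (hyh : y ∈ (h : Sym2 V))
    (heg : Quot.mk (edgeRel G) e = Quot.mk (edgeRel G) g)
    (hfh : Quot.mk (edgeRel G) f = Quot.mk (edgeRel G) h) : x = y := by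
  by_contra hxy
  obtain ⟨q1, hq1, -, hq1e⟩ := exists_path_of_mk_eq heg hxe hyg
  obtain ⟨q2, hq2, -, hq2e⟩ := exists_path_of_mk_eq hfh hxf hyh
  have := hT.IsAcyclic.path_unique ⟨q1, hq1⟩ ⟨q2, hq2⟩
  have heq : q1 = q2 := congrArg Subtype.val this
  have hnil : q1.edges ≠ [] := edges_ne_nil_of_ne q1 hxy
  set d := q1.edges.head hnil with hd_def
  have hd1 : d ∈ q1.edges := List.head_mem hnil
  have hd2 : d ∈ q2.edges := heq ▸ hd1
  obtain ⟨hd, hc1⟩ := hq1e d hd1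
  obtain ⟨hd', hc2⟩ := hq2e d hd2
  have hdd : (⟨d, hd⟩ : G.edgeSet) = ⟨d, hd'⟩ := rfl
  exact hef (hc1.symm.trans (hdd ▸ hc2))

lemma junction_pair (hT : G.IsTree) {x : V} {c c' d d' : Quot (edgeRel G)}
    (h1 : Junction G x c c') (hcc : c ≠ c') (h2 : Junction G x d d') (hdd : d ≠ d') :
    s(c, c') = s(d, d') := by
  obtain ⟨hdeg, e, f, hxe, hxf, rfl, rfl⟩ := h1
  obtain ⟨-, e', f', hxe', hxf', rfl, rfl⟩ := h2
  have hef : e ≠ f := by rintro rfl; exact hcc rfl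
  rcases edges_at_of_degree_two hdeg hxe hxf hef hxe' with rfl | rfl
  · rcases edges_at_of_degree_two hdeg hxe hxf hef hxf' with rfl | rfl
    · exact absurd rfl hdd
    · rfl
  · rcases edges_at_of_degree_two hdeg hxe hxf hef hxf' with rfl | rfl
    · exact Sym2.eq_swap
    · exact absurd rfl hdd

lemma isPath_append {u v w : V} {p : G.Walk u v} {q : G.Walk v w} (hp : p.IsPath)
    (hq : q.IsPath) (h : ∀ x, x ∈ p.support → x ∈ q.support → x = v) :
    (p.append q).IsPath := by
  rw [Walk.isPath_def, Walk.support_append]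
  have htail : q.support.tail.Nodup := by
    have := hq.support_nodup
    exact this.sublist (List.tail_sublist _)
  refine List.Nodup.append hp.support_nodup htail ?_
  intro x hx1 hx2
  have hx2' : x ∈ q.support := List.mem_of_mem_tail hx2
  have := h x hx1 hx2'
  subst this
  have := hq.support_nodup
  rw [q.support_eq_cons] at this
  exact (List.nodup_cons.mp this).1 hx2

/-- The main lifting lemma: a path in the contracted line graph, entered through a junction,
lifts to a path in `G`. -/
lemma lift (hT : G.IsTree) {a b : Quot (edgeRel G)} (t : (contractedLineGraph G).Walk a b) :
    t.IsPath → ¬ t.Nil →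
    ∀ z : Quot (edgeRel G), (contractedLineGraph G).Adj z a → s(z, a) ∉ t.edges →
    ∀ x : V, Junction G x z a →
    ∃ (y : V) (w : Quot (edgeRel G)) (R : G.Walk x y), R.IsPath ∧
      Junction G y w b ∧ w ≠ b ∧ s(w, b) ∈ t.edges ∧
      (∀ v ∈ R.support, 2 < G.degree v ∨
        ∃ p q : Quot (edgeRel G), Junction G v p q ∧ p ≠ q ∧ s(p, q) ∈ s(z, a) :: t.edges) ∧
      (∀ d ∈ R.edges, ∃ hd : d ∈ G.edgeSet, Quot.mk (edgeRel G) ⟨d, hd⟩ ∈ t.support ∧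
        Quot.mk (edgeRel G) ⟨d, hd⟩ ≠ b) := by
  induction t with
  | nil => intro _ hnn; exact absurd Walk.nil_nil hnn
  | @cons aa mm bb hadj u IH =>
    intro hp _ z hza hze x hx
    cases u with
    | nil =>
      -- base case: t is aa single edge from aa to mm (here mm = mm)
      obtain ⟨x1, e1, f1, hdeg1, hx1e, hx1f, hmk1, hmk1', hef1⟩ := adj_elim hadj
      have hJ1 : Junction G x1 aa mm := ⟨hdeg1, e1, f1, hx1e, hx1f, hmk1, hmk1'⟩
      obtain ⟨hxdeg, ex, fx, hxex, hxfx, hmkz, hmka⟩ := hx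
      have hJx : Junction G x z aa := ⟨hxdeg, ex, fx, hxex, hxfx, hmkz, hmka⟩
      obtain ⟨q, hqp, hqs, hqe⟩ := exists_path_of_mk_eq (hmka.trans hmk1.symm) hxfx hx1e
      have hqea : ∀ d ∈ q.edges, ∃ hd : d ∈ G.edgeSet, Quot.mk (edgeRel G) ⟨d, hd⟩ = aa := by
        intro d hd
        obtain ⟨hd', hc⟩ := hqe d hd
        exact ⟨hd', hc.trans hmka⟩
      refine ⟨x1, aa, q, hqp, hJ1, hadj.ne, by simp, ?_, ?_⟩
      · intro v hv
        rcases hqs v hv with rfl | rfl | h3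
        · exact Or.inr ⟨z, aa, hJx, hza.ne, List.mem_cons_self⟩
        · exact Or.inr ⟨aa, mm, hJ1, hadj.ne, by simp⟩
        · exact Or.inl h3
      · intro d hd
        obtain ⟨hd', hc⟩ := hqea d hd
        refine ⟨hd', ?_, ?_⟩
        · rw [hc]; simp
        · rw [hc]; exact hadj.ne
    | cons hadj' u' =>
      -- inductive step
      obtain ⟨x1, e1, f1, hdeg1, hx1e, hx1f, hmk1, hmk1', hef1⟩ := adj_elim hadj
      have hJ1 : Junction G x1 aa mm := ⟨hdeg1, e1, f1, hx1e, hx1f, hmk1, hmk1'⟩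
      obtain ⟨hxdeg, ex, fx, hxex, hxfx, hmkz, hmka⟩ := hx
      have hJx : Junction G x z aa := ⟨hxdeg, ex, fx, hxex, hxfx, hmkz, hmka⟩
      obtain ⟨q, hqp, hqs, hqe⟩ := exists_path_of_mk_eq (hmka.trans hmk1.symm) hxfx hx1e
      have hqea : ∀ d ∈ q.edges, ∃ hd : d ∈ G.edgeSet, Quot.mk (edgeRel G) ⟨d, hd⟩ = aa := by
        intro d hd
        obtain ⟨hd', hc⟩ := hqe d hd
        exact ⟨hd', hc.trans hmka⟩
      have hup : (Walk.cons hadj' u').IsPath := hp.of_cons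
      have hnu : ¬ (Walk.cons hadj' u').Nil := Walk.not_nil_cons
      have hze' : s(aa, mm) ∉ (Walk.cons hadj' u').edges :=
        ((Walk.isTrail_cons _ _).mp hp.isTrail).2
      have ham : aa ∉ (Walk.cons hadj' u').support := by
        have := hp.support_nodup
        rw [Walk.support_cons] at this
        exact (List.nodup_cons.mp this).1
      obtain ⟨y, w, R', hR'p, hJy, hwb, hswb, hR's, hR'e⟩ := IH hup hnu aa hadj hze' x1 hJ1
      have hab : aa ≠ bb := by
        intro h
        exact ham (h ▸ (Walk.cons hadj' u').end_mem_support)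
      have hshared : ∀ v, v ∈ q.support → v ∈ R'.support → v = x1 := by
        intro v hv1 hv2
        rcases hqs v hv1 with h1 | h1 | hdv
        · -- v = x
          exfalso
          rw [h1] at hv2
          rcases hR's x hv2 with h3 | ⟨p', q', hJ', hpq', hmem⟩
          · omega
          · have hpr := junction_pair hT hJx hza.ne hJ' hpq'
            rw [← hpr] at hmem
            rcases List.mem_cons.mp hmem with hmem1 | hmem1
            · rw [hmem1] at hze
              exact hze (by rw [Walk.edges_cons]; exact List.mem_cons_self)
            · exact hze (by rw [Walk.edges_cons]; exact List.mem_cons_of_mem _ hmem1)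
        · exact h1
        · -- v has degree > 2 and lies on both q and R' : impossible
          exfalso
          have hvx1 : v ≠ x1 := by intro h; rw [h, hdeg1] at hdv; omega
          have hA : (q.dropUntil v hv1).IsPath := hqp.dropUntil hv1
          have hB : ((R'.takeUntil v hv2).reverse).IsPath := (hR'p.takeUntil hv2).reverse
          have := hT.IsAcyclic.path_unique ⟨q.dropUntil v hv1, hA⟩
            ⟨(R'.takeUntil v hv2).reverse, hB⟩
          have hAB : q.dropUntil v hv1 = (R'.takeUntil v hv2).reverse :=
            congrArg Subtype.val this
          have hnil : (q.dropUntil v hv1).edges ≠ [] := edges_ne_nil_of_ne _ hvx1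
          have hd1 : (q.dropUntil v hv1).edges.head hnil ∈ (q.dropUntil v hv1).edges :=
            List.head_mem hnil
          set d := (q.dropUntil v hv1).edges.head hnil with hd_def
          have hdq : d ∈ q.edges := q.edges_dropUntil_subset hv1 hd1
          have hdR : d ∈ R'.edges := by
            have h2 : d ∈ ((R'.takeUntil v hv2).reverse).edges := hAB ▸ hd1
            rw [Walk.edges_reverse, List.mem_reverse] at h2
            exact R'.edges_takeUntil_subset hv2 h2
          obtain ⟨hd, hc⟩ := hqea d hdq
          obtain ⟨hd', hcs, -⟩ := hR'e d hdR
          have hdd : (⟨d, hd'⟩ : G.edgeSet) = ⟨d, hd⟩ := rfl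
          rw [hdd, hc] at hcs
          exact ham hcs
      refine ⟨y, w, q.append R', isPath_append hqp hR'p hshared, hJy, hwb, ?_, ?_, ?_⟩
      · rw [Walk.edges_cons]; exact List.mem_cons_of_mem _ hswb
      · intro v hv
        rw [Walk.mem_support_append_iff] at hv
        rcases hv with hv | hv
        · rcases hqs v hv with rfl | rfl | h3
          · exact Or.inr ⟨z, aa, hJx, hza.ne, List.mem_cons_self⟩
          · refine Or.inr ⟨aa, mm, hJ1, hadj.ne, ?_⟩
            rw [Walk.edges_cons]
            exact List.mem_cons_of_mem _ (List.mem_cons_self)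
          · exact Or.inl h3
        · rcases hR's v hv with h3 | ⟨p', q', hJ', hpq', hmem⟩
          · exact Or.inl h3
          · refine Or.inr ⟨p', q', hJ', hpq', ?_⟩
            rcases List.mem_cons.mp hmem with hmem1 | hmem1
            · rw [hmem1, Walk.edges_cons]
              exact List.mem_cons_of_mem _ (List.mem_cons_self)
            · rw [Walk.edges_cons]
              exact List.mem_cons_of_mem _ (List.mem_cons_of_mem _ hmem1)
      · intro d hd
        rw [Walk.edges_append, List.mem_append] at hd
        rcases hd with hd | hd
        · obtain ⟨hd', hc⟩ := hqea d hd
          refine ⟨hd', ?_, ?_⟩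
          · rw [hc, Walk.support_cons]; exact List.mem_cons_self
          · rw [hc]; exact hab
        · obtain ⟨hd', hcs, hnb⟩ := hR'e d hd
          refine ⟨hd', ?_, hnb⟩
          rw [Walk.support_cons]
          exact List.mem_cons_of_mem _ hcs

end CLGAux

open SimpleGraph Walk CLGAux in
/-- for a finite tree `G` (with at least one edge), the graph `G'` obtained from
the line graph `L(G)` by contracting every maximal clique with more than two vertices is again
a tree, and its edges are in bijection with the degree-2 vertices of `G`. -/
theorem contracted_line_graph_is_tree {V : Type*} [Fintype V] [DecidableEq V]
    (G : SimpleGraph V) [DecidableRel G.Adj] (hT : G.IsTree) (h2 : 2 ≤ Fintype.card V) :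
    (contractedLineGraph G).IsTree ∧
      Nonempty ((contractedLineGraph G).edgeSet ≃ {v : V // G.degree v = 2}) := by
  classical
  -- `G` has an edge
  have hedge : Nonempty G.edgeSet := by
    obtain ⟨v, w, hvw⟩ := Fintype.exists_pair_of_one_lt_card (by omega : 1 < Fintype.card V)
    obtain ⟨p⟩ := hT.isConnected.preconnected v w
    cases p with
    | nil => exact absurd rfl hvw
    | cons h q => exact ⟨⟨_, (SimpleGraph.mem_edgeSet G).mpr h⟩⟩
  -- reachability helper
  have reach_of_share : ∀ (e f : G.edgeSet) (x : V), x ∈ (e : Sym2 V) → x ∈ (f : Sym2 V) →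
      (contractedLineGraph G).Reachable (Quot.mk _ e) (Quot.mk _ f) := by
    intro e f x hxe hxf
    by_cases h : Quot.mk (edgeRel G) e = Quot.mk (edgeRel G) f
    · rw [h]
    · exact SimpleGraph.Adj.reachable
        ((SimpleGraph.fromRel_adj _ _ _).mpr ⟨h, Or.inl ⟨e, f, rfl, rfl, x, hxe, hxf⟩⟩)
  have hconn : (contractedLineGraph G).Connected := by
    have key : ∀ (u w : V) (p : G.Walk u w) (e f : G.edgeSet), u ∈ (e : Sym2 V) →
        w ∈ (f : Sym2 V) → (contractedLineGraph G).Reachable (Quot.mk _ e) (Quot.mk _ f) := by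
      intro u w p
      induction p with
      | nil => intro e f hu hw; exact reach_of_share e f _ hu hw
      | @cons u' v' w' h p ih =>
        intro e f hu hw
        have h1 := reach_of_share e ⟨s(u', v'), h⟩ u' hu (Sym2.mem_mk_left _ _)
        have h2 := ih ⟨s(u', v'), h⟩ f (Sym2.mem_mk_right _ _) hw
        exact h1.trans h2
    have hne : Nonempty (Quot (edgeRel G)) := by
      obtain ⟨e⟩ := hedge
      exact ⟨Quot.mk _ e⟩
    haveI := hne
    refine SimpleGraph.Connected.mk ?_
    intro c c'
    induction c using Quot.ind with | _ e => ?_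
    induction c' using Quot.ind with | _ f => ?_
    have hmem : ∀ z : Sym2 V, ∃ x, x ∈ z := fun z =>
      Sym2.ind (fun x y => ⟨x, Sym2.mem_mk_left x y⟩) z
    obtain ⟨ue, hue⟩ := hmem (e : Sym2 V)
    obtain ⟨uf, huf⟩ := hmem (f : Sym2 V)
    obtain ⟨p⟩ := hT.isConnected.preconnected ue uf
    exact key ue uf p e f hue huf
  have hacyc : (contractedLineGraph G).IsAcyclic := by
    intro c0 wk hcyc
    cases wk with
    | nil => exact hcyc.ne_nil rfl
    | @cons _ a _ hza t =>
      have htr := (Walk.isTrail_cons _ _).mp hcyc.isTrail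
      have htp : t.IsPath := by
        rw [Walk.isPath_def]
        have := hcyc.support_nodup
        rwa [Walk.support_cons, List.tail_cons] at this
      have hnn : ¬ t.Nil := Walk.not_nil_of_ne hza.ne'
      obtain ⟨x0, e, f, hdeg0, hx0e, hx0f, hmke, hmkf, hef⟩ := adj_elim hza
      have hJ0 : Junction G x0 c0 a := ⟨hdeg0, e, f, hx0e, hx0f, hmke, hmkf⟩
      obtain ⟨y, w, R, hRp, hJy, hwb, hswb, hRs, hRe⟩ := lift hT t htp hnn c0 hza htr.2 x0 hJ0
      obtain ⟨hydeg, g1, g2, hyg1, hyg2, hmkg1, hmkg2⟩ := hJy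
      obtain ⟨qf, hqfp, -, hqfe⟩ := exists_path_of_mk_eq (hmkg2.trans hmke.symm) hyg2 hx0e
      have hyx : y ≠ x0 := by
        intro h
        subst h
        have hpr := junction_pair hT ⟨hydeg, g1, g2, hyg1, hyg2, hmkg1, hmkg2⟩ hwb hJ0 hza.ne
        rcases Sym2.eq_iff.mp hpr with ⟨h1, h2⟩ | ⟨h1, h2⟩
        · exact hwb h1
        · rw [h1] at hswb
          rw [Sym2.eq_swap] at hswb
          exact htr.2 hswb
      have := hT.IsAcyclic.path_unique ⟨qf, hqfp⟩ ⟨R.reverse, hRp.reverse⟩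
      have hqR : qf = R.reverse := congrArg Subtype.val this
      have hnil : qf.edges ≠ [] := edges_ne_nil_of_ne qf hyx
      set d := qf.edges.head hnil with hd_def
      have hd1 : d ∈ qf.edges := List.head_mem hnil
      have hdR : d ∈ R.edges := by
        have h2 : d ∈ R.reverse.edges := hqR ▸ hd1
        rwa [Walk.edges_reverse, List.mem_reverse] at h2
      obtain ⟨hd, hc⟩ := hqfe d hd1
      obtain ⟨hd', -, hnb⟩ := hRe d hdR
      have hdd : (⟨d, hd'⟩ : G.edgeSet) = ⟨d, hd⟩ := rfl
      rw [hdd, hc] at hnb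
      exact hnb hmkg2
  refine ⟨⟨hconn, hacyc⟩, ?_⟩
  -- the bijection
  have claim : ∀ x : {v : V // G.degree v = 2},
      ∃ s : (contractedLineGraph G).edgeSet, ∃ e f : G.edgeSet, e ≠ f ∧
        (x : V) ∈ (e : Sym2 V) ∧ (x : V) ∈ (f : Sym2 V) ∧
        (s : Sym2 (Quot (edgeRel G))) = s(Quot.mk _ e, Quot.mk _ f) := by
    rintro ⟨x, hx⟩
    obtain ⟨A, hA⟩ := Finset.card_eq_two.mp
      (by rw [G.card_neighborFinset_eq_degree x, hx] : (G.neighborFinset x).card = 2)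
    obtain ⟨B, hab, hAB⟩ := hA
    have hxa : G.Adj x A := by
      rw [← SimpleGraph.mem_neighborFinset, hAB]; exact Finset.mem_insert_self _ _
    have hxb : G.Adj x B := by
      rw [← SimpleGraph.mem_neighborFinset, hAB]
      exact Finset.mem_insert_of_mem (Finset.mem_singleton_self _)
    set e : G.edgeSet := ⟨s(x, A), (SimpleGraph.mem_edgeSet G).mpr hxa⟩ with he_def
    set f : G.edgeSet := ⟨s(x, B), (SimpleGraph.mem_edgeSet G).mpr hxb⟩ with hf_def
    have hef : e ≠ f := by
      intro h
      apply hab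
      have := congrArg Subtype.val h
      simp only [he_def, hf_def] at this
      exact Sym2.congr_right.mp this
    have hxe : x ∈ (e : Sym2 V) := Sym2.mem_mk_left _ _
    have hxf : x ∈ (f : Sym2 V) := Sym2.mem_mk_left _ _
    have hne := mk_ne_of_degree_two hT hx hxe hxf hef
    have hadj : (contractedLineGraph G).Adj (Quot.mk _ e) (Quot.mk _ f) :=
      (SimpleGraph.fromRel_adj _ _ _).mpr ⟨hne, Or.inl ⟨e, f, rfl, rfl, x, hxe, hxf⟩⟩
    exact ⟨⟨s(Quot.mk _ e, Quot.mk _ f), (SimpleGraph.mem_edgeSet (contractedLineGraph G)).mpr hadj⟩,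
      e, f, hef, hxe, hxf, rfl⟩
  choose Φ Φe Φf hne hmem1 hmem2 hpair using claim
  have hmkne : ∀ x, Quot.mk (edgeRel G) (Φe x) ≠ Quot.mk (edgeRel G) (Φf x) := by
    intro x
    exact mk_ne_of_degree_two hT x.2 (hmem1 x) (hmem2 x) (hne x)
  have hinj : Function.Injective Φ := by
    intro x y h
    have hp : (s(Quot.mk _ (Φe x), Quot.mk _ (Φf x)) : Sym2 (Quot (edgeRel G)))
        = s(Quot.mk _ (Φe y), Quot.mk _ (Φf y)) := by
      rw [← hpair x, ← hpair y, h]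
    apply Subtype.ext
    rcases Sym2.eq_iff.mp hp with ⟨h1, h2⟩ | ⟨h1, h2⟩
    · exact eq_of_junction hT (hmkne x) (hmem1 x) (hmem2 x) (hmem1 y) (hmem2 y) h1 h2
    · exact eq_of_junction hT (hmkne x) (hmem1 x) (hmem2 x) (hmem2 y) (hmem1 y) h1 h2
  have hsurj : Function.Surjective Φ := by
    rintro ⟨se, hse⟩
    induction se using Sym2.ind with
    | _ c c' =>
      have hadj : (contractedLineGraph G).Adj c c' :=
        (SimpleGraph.mem_edgeSet (contractedLineGraph G)).mp hse
      obtain ⟨x, e', f', hdeg, hxe', hxf', hc, hc', hef'⟩ := adj_elim hadj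
      refine ⟨⟨x, hdeg⟩, ?_⟩
      apply Subtype.ext
      rw [hpair ⟨x, hdeg⟩]
      have hA := edges_at_of_degree_two hdeg hxe' hxf' hef' (hmem1 ⟨x, hdeg⟩)
      have hB := edges_at_of_degree_two hdeg hxe' hxf' hef' (hmem2 ⟨x, hdeg⟩)
      rcases hA with hA | hA <;> rcases hB with hB | hB
      · exact absurd (hA.trans hB.symm) (hne ⟨x, hdeg⟩)
      · rw [hA, hB, hc, hc']
      · rw [hA, hB, hc, hc']; exact Sym2.eq_swap
      · exact absurd (hA.trans hB.symm) (hne ⟨x, hdeg⟩)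
  exact ⟨(Equiv.ofBijective Φ ⟨hinj, hsurj⟩).symm⟩
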